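/- (Deflation Theorem 2.) Let f(x) be an n-variate polynomial system with a μ-fold isolated zero at x = ζ, let B = (b₁,…,b_μ) be a basis of R/Q_ζ with dual basis 𝒟 = (Λ₁,…,Λ_μ) of 𝒟_ζ, Λ₁ = 1, and set g_k(x, ε_k) = f_k(x) + Σ_{i=1}^{μ} ε_{i,k} b_i(x). Let 𝒟g(x, ε) = (Λ_i(∂_x)[g_k])_{i,k} be the resulting system of μ·s polynomials in the n + μ·s variables (x, ε), and let I = {(i₁,k₁),…,(iₙ,kₙ)} index n rows of J_{𝒟f}(ζ) that are linearly independent. Let 𝒟g̃(x, ε̃) be the square (μ·s) × (μ·s) system obtained from 𝒟g by setting the n variables ε_{i₁,k₁},…,ε_{iₙ,kₙ} to zero. Then 𝒟g̃ has a regular isolated root at (x, ε̃) = (ζ, 0): it vanishes there and its Jacobian matrix at (ζ, 0) is nonsingular. -/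

import Mathlib

open MvPolynomial

/-- Total degree of a multi-exponent. -/
def multideg {n : ℕ} (α : Fin n →₀ ℕ) : ℕ := α.sum fun _ k => k

/-- Normalized derivative `d^α g = (1/α!) ∂^α g` as a polynomial. -/
noncomputable def nderiv {n : ℕ} (α : Fin n →₀ ℕ) (g : MvPolynomial (Fin n) ℝ) :
    MvPolynomial (Fin n) ℝ :=
  ∑ γ ∈ g.support,
    monomial (γ - α) (((∏ i, (γ i).choose (α i) : ℕ) : ℝ) * coeff γ g)

/-- `Λ(∂_x)[g]`: apply the differential operator with coefficients `Λ`
(in the normalized basis `d^α`), keeping a polynomial result. -/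
noncomputable def applyPoly {n : ℕ} (Λ : (Fin n →₀ ℕ) →₀ ℝ)
    (g : MvPolynomial (Fin n) ℝ) : MvPolynomial (Fin n) ℝ :=
  Λ.sum fun α c => c • nderiv α g

/-- `Λ ↦ Λ^ζ[g]`, as a linear map in `Λ`. -/
noncomputable def applyAtL {n : ℕ} (ζ : Fin n → ℝ) (g : MvPolynomial (Fin n) ℝ) :
    ((Fin n →₀ ℕ) →₀ ℝ) →ₗ[ℝ] ℝ :=
  Finsupp.linearCombination ℝ (fun α => eval ζ (nderiv α g))

/-- `Λ^ζ[g]`. -/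
noncomputable def applyAt {n : ℕ} (ζ : Fin n → ℝ) (Λ : (Fin n →₀ ℕ) →₀ ℝ)
    (g : MvPolynomial (Fin n) ℝ) : ℝ := applyAtL ζ g Λ

/-- The orthogonal (dual space) of an ideal at ζ. -/
noncomputable def dualSpace {n : ℕ} (ζ : Fin n → ℝ)
    (Q : Ideal (MvPolynomial (Fin n) ℝ)) : Submodule ℝ ((Fin n →₀ ℕ) →₀ ℝ) :=
  ⨅ p ∈ Q, LinearMap.ker (applyAtL ζ p)

/-- The maximal ideal at ζ. -/
noncomputable def maxIdealAt {n : ℕ} (ζ : Fin n → ℝ) : Ideal (MvPolynomial (Fin n) ℝ) :=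
  Ideal.span (Set.range fun i => X i - C (ζ i))

/-- `Q` is the primary component of `I` at an isolated root `ζ`. -/
def IsPrimaryComponentAt {n : ℕ} (ζ : Fin n → ℝ)
    (I Q : Ideal (MvPolynomial (Fin n) ℝ)) : Prop :=
  Q.IsPrimary ∧ Q.radical = maxIdealAt ζ ∧
    ∃ S : Finset (Ideal (MvPolynomial (Fin n) ℝ)),
      (∀ P ∈ S, P.IsPrimary ∧ ¬ P.radical ≤ maxIdealAt ζ) ∧ I = S.inf id ⊓ Q

/-- Elements of the dual space of degree at most `t`. -/
noncomputable def dualSpaceLE {n : ℕ} (ζ : Fin n → ℝ)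
    (Q : Ideal (MvPolynomial (Fin n) ℝ)) (t : ℕ) :
    Submodule ℝ ((Fin n →₀ ℕ) →₀ ℝ) :=
  dualSpace ζ Q ⊓ Finsupp.supported ℝ ℝ {α | multideg α ≤ t}

/-- The derivation `∂/∂∂_i` in the normalized coordinates: shift of coefficients. -/
noncomputable def dshift {n : ℕ} (i : Fin n) (Λ : (Fin n →₀ ℕ) →₀ ℝ) :
    (Fin n →₀ ℕ) →₀ ℝ :=
  Finsupp.comapDomain (fun β => β + Finsupp.single i 1) Λ
    (fun _ _ _ _ h => add_right_cancel h)

/-- Truncation: set `∂_j = 0` for `j > k`. -/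
noncomputable def trunck {n : ℕ} (k : Fin n) (Λ : (Fin n →₀ ℕ) →₀ ℝ) :
    (Fin n →₀ ℕ) →₀ ℝ :=
  Λ.filter (fun α => ∀ j, k < j → α j = 0)

/-- Integration with respect to `∂_k` in the normalized coordinates. -/
noncomputable def intk {n : ℕ} (k : Fin n) (Λ : (Fin n →₀ ℕ) →₀ ℝ) :
    (Fin n →₀ ℕ) →₀ ℝ :=
  Finsupp.mapDomain (fun α => α + Finsupp.single k 1) Λ

/-- Row `(i,k)` of the Jacobian of the system `𝒟f = (Λ_i(∂_x)[f_k])_{i,k}`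
at the point `ζ`. -/
noncomputable def jacRow {n s μ : ℕ} (Λs : Fin μ → ((Fin n →₀ ℕ) →₀ ℝ))
    (f : Fin s → MvPolynomial (Fin n) ℝ) (ζ : Fin n → ℝ)
    (ik : Fin μ × Fin s) (j : Fin n) : ℝ :=
  MvPolynomial.eval ζ (MvPolynomial.pderiv j (applyPoly (Λs ik.1) (f ik.2)))

section Stmt14

attribute [local instance] Classical.propDecidable

/-- Extend an assignment of the remaining `ε`-variables (those not indexed by
`sel`) to all `ε`-variables, setting the removed ones to `0`. -/
noncomputable def extVars {n μ s : ℕ} (sel : Fin n → Fin μ × Fin s)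
    (ε : {jk : Fin μ × Fin s // jk ∉ Set.range sel} → ℝ) :
    Fin μ × Fin s → ℝ :=
  fun jk => if h : jk ∈ Set.range sel then 0 else ε ⟨jk, h⟩

/-- The square deflated system `𝒟g̃(x, ε̃)`: component `(i,k)` is
`Λ_i(∂_x)[g_k]` where `g_k = f_k + Σ_j ε_{j,k} b_j` and the `n` variables
`ε_{sel 1}, …, ε_{sel n}` are set to `0`. -/
noncomputable def deflSys2 {n μ s : ℕ} (Λs : Fin μ → ((Fin n →₀ ℕ) →₀ ℝ))
    (f : Fin s → MvPolynomial (Fin n) ℝ) (b : Fin μ → MvPolynomial (Fin n) ℝ)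
    (sel : Fin n → Fin μ × Fin s)
    (y : (Fin n → ℝ) × ({jk : Fin μ × Fin s // jk ∉ Set.range sel} → ℝ))
    (ik : Fin μ × Fin s) : ℝ :=
  MvPolynomial.eval y.1 (applyPoly (Λs ik.1) (f ik.2)) +
    ∑ j, extVars sel y.2 (j, ik.2) * MvPolynomial.eval y.1 (applyPoly (Λs ik.1) (b j))


noncomputable def projPi {ι : Type} [Fintype ι] (i : ι) : (ι → ℝ) →L[ℝ] ℝ :=
  ContinuousLinearMap.proj i

lemma hasFDerivAt_evalP {n : ℕ} (P : MvPolynomial (Fin n) ℝ) (ζ : Fin n → ℝ) :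
    HasFDerivAt (fun x : Fin n → ℝ => eval x P)
      (∑ j, eval ζ (pderiv j P) • projPi j) ζ := by
  induction P using MvPolynomial.induction_on with
  | C a =>
      simp only [eval_C, pderiv_C, map_zero, zero_smul, Finset.sum_const_zero]
      exact hasFDerivAt_const a ζ
  | add p q hp hq =>
      have := hp.fun_add hq
      simp only [map_add] at this ⊢
      refine this.congr_fderiv ?_
      simp [add_smul, Finset.sum_add_distrib]
  | mul_X p i hp =>
      have hx : HasFDerivAt (fun x : Fin n → ℝ => x i) (projPi i) ζ :=
        (projPi i).hasFDerivAt
      have := hp.fun_mul hx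
      simp only [map_mul, eval_X] at this ⊢
      refine this.congr_fderiv ?_
      symm
      ext v
      classical
      simp only [ContinuousLinearMap.coe_sum', Finset.sum_apply,
        ContinuousLinearMap.coe_smul', Pi.smul_apply, smul_eq_mul,
        ContinuousLinearMap.add_apply,
        pderiv_mul, map_add, map_mul, eval_X, pderiv_X, Pi.single_apply,
        projPi, ContinuousLinearMap.proj_apply]
      rw [Finset.sum_congr rfl
        (g := fun j => eval ζ (pderiv j p) * v j * ζ i + eval ζ p * (if i = j then v j else 0))
        (fun j _ => by rcases eq_or_ne i j with h | h <;> simp [h] <;> ring)]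
      simp [Finset.sum_add_distrib, ← Finset.sum_mul, Finset.sum_ite_eq]
      ring

lemma eval_applyPoly {n : ℕ} (ζ : Fin n → ℝ) (Λ : (Fin n →₀ ℕ) →₀ ℝ)
    (g : MvPolynomial (Fin n) ℝ) :
    eval ζ (applyPoly Λ g) = applyAtL ζ g Λ := by
  rw [applyPoly, applyAtL, Finsupp.linearCombination_apply, map_finsuppSum]
  exact Finsupp.sum_congr fun α _ => by rw [smul_eval]; rfl

lemma applyAtL_eq_zero {n : ℕ} (ζ : Fin n → ℝ) (Q : Ideal (MvPolynomial (Fin n) ℝ))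
    (Λ : (Fin n →₀ ℕ) →₀ ℝ) (hΛ : Λ ∈ dualSpace ζ Q)
    (p : MvPolynomial (Fin n) ℝ) (hp : p ∈ Q) : applyAtL ζ p Λ = 0 := by
  have h := hΛ
  rw [dualSpace, Submodule.mem_iInf] at h
  have h2 := h p
  rw [Submodule.mem_iInf] at h2
  exact h2 hp

/-- Deflation Theorem 2: with `B = (b₁,…,b_μ)` a basis of
`R/Q_ζ`, `𝒟 = (Λ₁,…,Λ_μ)` its dual basis of `𝒟_ζ` with `Λ₁ = 1`, and `sel`
selecting `n` linearly independent rows of `J_{𝒟f}(ζ)`, the square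
`(μ·s) × (μ·s)` system `𝒟g̃(x, ε̃)` obtained from `𝒟g` by setting the `n`
variables `ε_{sel j}` to zero has a regular isolated root at `(ζ, 0)`: it
vanishes there and its Jacobian (total derivative) there is nonsingular. -/
theorem stmt14 {n s μ : ℕ} (hμpos : 0 < μ)
    (f : Fin s → MvPolynomial (Fin n) ℝ) (ζ : Fin n → ℝ)
    (Q : Ideal (MvPolynomial (Fin n) ℝ))
    (hQ : IsPrimaryComponentAt ζ (Ideal.span (Set.range f)) Q)
    (hμ : Module.finrank ℝ (MvPolynomial (Fin n) ℝ ⧸ Q) = μ)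
    (b : Fin μ → MvPolynomial (Fin n) ℝ)
    (hbli : LinearIndependent ℝ (fun j => Ideal.Quotient.mk Q (b j)))
    (hbsp : Submodule.span ℝ (Set.range fun j => Ideal.Quotient.mk Q (b j)) = ⊤)
    (Λs : Fin μ → ((Fin n →₀ ℕ) →₀ ℝ))
    (hΛli : LinearIndependent ℝ Λs)
    (hΛsp : Submodule.span ℝ (Set.range Λs) = dualSpace ζ Q)
    (hdual : ∀ i j, applyAt ζ (Λs i) (b j) = if i = j then 1 else 0)
    (hΛ1 : Λs ⟨0, hμpos⟩ = Finsupp.single 0 (1 : ℝ))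
    (sel : Fin n → Fin μ × Fin s) (hselinj : Function.Injective sel)
    (hsel : LinearIndependent ℝ (fun j : Fin n => jacRow Λs f ζ (sel j))) :
    (∀ ik : Fin μ × Fin s, deflSys2 Λs f b sel (ζ, 0) ik = 0) ∧
    Function.Bijective
      (fderiv ℝ (fun y => fun ik => deflSys2 Λs f b sel y ik) (ζ, 0)) := by
  classical
  -- basic vanishing facts
  have hfQ : ∀ k, f k ∈ Q := by
    intro k
    obtain ⟨S, hS, hI⟩ := hQ.2.2
    have : f k ∈ Ideal.span (Set.range f) := Ideal.subset_span ⟨k, rfl⟩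
    rw [hI] at this
    exact this.2
  have hΛD : ∀ i, Λs i ∈ dualSpace ζ Q := by
    intro i
    rw [← hΛsp]
    exact Submodule.subset_span ⟨i, rfl⟩
  have hPz : ∀ ik : Fin μ × Fin s, eval ζ (applyPoly (Λs ik.1) (f ik.2)) = 0 := by
    intro ik
    rw [eval_applyPoly]
    exact applyAtL_eq_zero ζ Q _ (hΛD ik.1) _ (hfQ ik.2)
  have hext0 : ∀ jk, extVars sel (0 : {jk : Fin μ × Fin s // jk ∉ Set.range sel} → ℝ) jk = 0 := by
    intro jk
    unfold extVars
    split <;> rfl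
  have hBd : ∀ i j, eval ζ (applyPoly (Λs i) (b j)) = if i = j then 1 else 0 := by
    intro i j
    rw [eval_applyPoly]
    exact hdual i j
  refine ⟨?_, ?_⟩
  · intro ik
    simp [deflSys2, hext0, hPz]
  -- the Jacobian
  · set E := (Fin n → ℝ) × ({jk : Fin μ × Fin s // jk ∉ Set.range sel} → ℝ) with hE
    set Eclm : Fin μ × Fin s → (((Fin n → ℝ) × ({jk : Fin μ × Fin s // jk ∉ Set.range sel} → ℝ)) →L[ℝ] ℝ) := fun jk =>
      if h : jk ∈ Set.range sel then 0 else
        (projPi (⟨jk, h⟩ : {jk : Fin μ × Fin s // jk ∉ Set.range sel})).comp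
          (ContinuousLinearMap.snd ℝ _ _) with hEclm
    have hEapp : ∀ jk (y : (Fin n → ℝ) × ({jk : Fin μ × Fin s // jk ∉ Set.range sel} → ℝ)), Eclm jk y = extVars sel y.2 jk := by
      intro jk y
      rw [hEclm, extVars]
      by_cases h : jk ∈ Set.range sel
      · simp [h]
      · simp [h, projPi]
    set Lik : Fin μ × Fin s → (((Fin n → ℝ) × ({jk : Fin μ × Fin s // jk ∉ Set.range sel} → ℝ)) →L[ℝ] ℝ) := fun ik =>
      ((∑ j, eval ζ (pderiv j (applyPoly (Λs ik.1) (f ik.2))) • projPi j).comp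
        (ContinuousLinearMap.fst ℝ _ _)) +
      ∑ j, eval ζ (applyPoly (Λs ik.1) (b j)) • Eclm (j, ik.2) with hLik
    have hF : HasFDerivAt (fun y : (Fin n → ℝ) × ({jk : Fin μ × Fin s // jk ∉ Set.range sel} → ℝ) => fun ik => deflSys2 Λs f b sel y ik)
        (ContinuousLinearMap.pi Lik) ((ζ, 0) : (Fin n → ℝ) × ({jk : Fin μ × Fin s // jk ∉ Set.range sel} → ℝ)) := by
      rw [hasFDerivAt_pi']
      intro ik
      rw [ContinuousLinearMap.proj_pi]
      have h1 : HasFDerivAt (fun y : (Fin n → ℝ) × ({jk : Fin μ × Fin s // jk ∉ Set.range sel} → ℝ) => eval y.1 (applyPoly (Λs ik.1) (f ik.2)))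
          ((∑ j, eval ζ (pderiv j (applyPoly (Λs ik.1) (f ik.2))) • projPi j).comp
            (ContinuousLinearMap.fst ℝ _ _)) ((ζ, 0) : (Fin n → ℝ) × ({jk : Fin μ × Fin s // jk ∉ Set.range sel} → ℝ)) := by
        have q := hasFDerivAt_evalP (applyPoly (Λs ik.1) (f ik.2)) ζ
        have r := hasFDerivAt_fst (𝕜 := ℝ) (E := Fin n → ℝ) (F := {jk : Fin μ × Fin s // jk ∉ Set.range sel} → ℝ) (p := (ζ, 0))
        exact q.comp ((ζ, 0) : (Fin n → ℝ) × ({jk : Fin μ × Fin s // jk ∉ Set.range sel} → ℝ)) r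
      have h2 : ∀ j : Fin μ, HasFDerivAt
          (fun y : (Fin n → ℝ) × ({jk : Fin μ × Fin s // jk ∉ Set.range sel} → ℝ) => extVars sel y.2 (j, ik.2) * eval y.1 (applyPoly (Λs ik.1) (b j)))
          (eval ζ (applyPoly (Λs ik.1) (b j)) • Eclm (j, ik.2)) ((ζ, 0) : (Fin n → ℝ) × ({jk : Fin μ × Fin s // jk ∉ Set.range sel} → ℝ)) := by
        intro j
        have hEd : HasFDerivAt (fun y : (Fin n → ℝ) × ({jk : Fin μ × Fin s // jk ∉ Set.range sel} → ℝ) => extVars sel y.2 (j, ik.2))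
            (Eclm (j, ik.2)) ((ζ, 0) : (Fin n → ℝ) × ({jk : Fin μ × Fin s // jk ∉ Set.range sel} → ℝ)) := by
          have h0 := (Eclm (j, ik.2)).hasFDerivAt (x := ((ζ, 0) : (Fin n → ℝ) × ({jk : Fin μ × Fin s // jk ∉ Set.range sel} → ℝ)))
          exact h0.congr_of_eventuallyEq
            (Filter.Eventually.of_forall fun y => (hEapp _ y).symm)
        have hBder : HasFDerivAt (fun y : (Fin n → ℝ) × ({jk : Fin μ × Fin s // jk ∉ Set.range sel} → ℝ) => eval y.1 (applyPoly (Λs ik.1) (b j)))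
            ((∑ j', eval ζ (pderiv j' (applyPoly (Λs ik.1) (b j))) • projPi j').comp
              (ContinuousLinearMap.fst ℝ _ _)) ((ζ, 0) : (Fin n → ℝ) × ({jk : Fin μ × Fin s // jk ∉ Set.range sel} → ℝ)) := by
          have q := hasFDerivAt_evalP (applyPoly (Λs ik.1) (b j)) ζ
          have r := hasFDerivAt_fst (𝕜 := ℝ) (E := Fin n → ℝ) (F := {jk : Fin μ × Fin s // jk ∉ Set.range sel} → ℝ) (p := (ζ, 0))
          exact q.comp ((ζ, 0) : (Fin n → ℝ) × ({jk : Fin μ × Fin s // jk ∉ Set.range sel} → ℝ)) r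
        have hmul := hEd.fun_mul hBder
        simpa [hext0] using hmul
      have hsum := HasFDerivAt.fun_sum (u := Finset.univ) (fun j _ => h2 j)
      have := h1.fun_add hsum
      exact this
    rw [hF.fderiv]
    -- collapse the second sum in `Lik`
    have hLik' : ∀ ik (y : (Fin n → ℝ) × ({jk : Fin μ × Fin s // jk ∉ Set.range sel} → ℝ)), Lik ik y =
        (∑ j, jacRow Λs f ζ ik j * y.1 j) + Eclm ik y := by
      intro ik y
      rw [hLik]
      simp only [ContinuousLinearMap.add_apply, ContinuousLinearMap.coe_comp',
        Function.comp_apply, ContinuousLinearMap.coe_fst',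
        ContinuousLinearMap.coe_sum', Finset.sum_apply,
        ContinuousLinearMap.coe_smul', Pi.smul_apply, smul_eq_mul]
      have e1 : ∀ j, eval ζ (pderiv j (applyPoly (Λs ik.1) (f ik.2))) = jacRow Λs f ζ ik j :=
        fun j => rfl
      have e2 : ∑ j, eval ζ (applyPoly (Λs ik.1) (b j)) * Eclm (j, ik.2) y = Eclm ik y := by
        rw [Finset.sum_congr rfl (fun j _ => by rw [hBd ik.1 j])]
        simp only [ite_mul, one_mul, zero_mul]
        rw [Finset.sum_ite_eq Finset.univ ik.1 (fun j => Eclm (j, ik.2) y)]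
        simp
      rw [e2]
      simp only [e1, projPi, ContinuousLinearMap.proj_apply]
    -- injectivity
    have hinj : Function.Injective ⇑(ContinuousLinearMap.pi Lik) := by
      rw [injective_iff_map_eq_zero]
      rintro ⟨v, w⟩ hy
      have happ : ∀ ik : Fin μ × Fin s,
          (∑ j, jacRow Λs f ζ ik j * v j) + Eclm ik (v, w) = 0 := by
        intro ik
        have h := congr_fun hy ik
        rw [ContinuousLinearMap.pi_apply] at h
        rw [← hLik' ik (v, w)]
        exact h
      set M : Matrix (Fin n) (Fin n) ℝ := Matrix.of fun m j => jacRow Λs f ζ (sel m) j with hM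
      have hMunit : IsUnit M :=
        Matrix.linearIndependent_rows_iff_isUnit.mp hsel
      have hv : v = 0 := by
        have hMv : M.mulVec v = M.mulVec 0 := by
          funext m
          have h := happ (sel m)
          rw [hEclm] at h
          simp only [dif_pos (Set.mem_range_self m), ContinuousLinearMap.zero_apply,
            add_zero] at h
          simpa [Matrix.mulVec, dotProduct, hM] using h
        exact Matrix.mulVec_injective_iff_isUnit.mpr hMunit hMv
      have hw : w = 0 := by
        funext jk
        obtain ⟨jk, hjk⟩ := jk
        have h := happ jk
        rw [hEclm, hv] at h
        simp only [dif_neg hjk] at h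
        simpa [projPi] using h
      simp [Prod.ext_iff, hv, hw]
    have hcardle : n ≤ μ * s := by
      have := Fintype.card_le_of_injective sel hselinj
      simpa using this
    have hfr : Module.finrank ℝ ((Fin n → ℝ) × ({jk : Fin μ × Fin s // jk ∉ Set.range sel} → ℝ))
        = Module.finrank ℝ (Fin μ × Fin s → ℝ) := by
      rw [Module.finrank_prod, Module.finrank_fintype_fun_eq_card,
        Module.finrank_fintype_fun_eq_card, Module.finrank_fintype_fun_eq_card]
      have hc : Fintype.card {jk : Fin μ × Fin s // jk ∉ Set.range sel}
          = μ * s - n := by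
        have h1 : Fintype.card {jk : Fin μ × Fin s // jk ∉ Set.range sel}
            = Fintype.card (↥(Set.range sel)ᶜ : Sort _) := Fintype.card_congr (Equiv.refl _)
        rw [h1, Fintype.card_compl_set]
        have h2 : Fintype.card (Set.range sel) = n := by
          rw [Set.card_range_of_injective hselinj, Fintype.card_fin]
        rw [h2]
        simp
      rw [hc]
      simp [Fintype.card_fin]
      omega
    have hsurj : Function.Surjective ⇑(ContinuousLinearMap.pi Lik) := by
      have := (LinearMap.injective_iff_surjective_of_finrank_eq_finrank hfr
        (f := ((ContinuousLinearMap.pi Lik).toLinearMap : ((Fin n → ℝ) × ({jk : Fin μ × Fin s // jk ∉ Set.range sel} → ℝ)) →ₗ[ℝ] (Fin μ × Fin s → ℝ)))).mp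
      exact this hinj
    exact ⟨hinj, hsurj⟩


end Stmt14
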